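/- Let C be a finite set of centers, C* an optimal k-means solution with clusters A, and suppose A is unsettled with respect to C, i.e., φ_A(C) > 10·φ_A(C*). In one sampling round where each point x ∈ X is independently added with probability min(1, ℓ·φ_x(C)/φ_X(C)), the probability that A is not made settled (i.e., that after adding the sampled points C' we still have φ_A(C ∪ C') > 10·φ_A(C*)) is at most exp(−ℓ·φ_A(C)/(5·φ_X(C))). -/

import Mathlib

open scoped BigOperators

attribute [local instance] Classical.propDecidable


lemma double_sum_sq {E : Type*} [NormedAddCommGroup E] [InnerProductSpace ℝ E]
    (A : Finset E) (hA : A.Nonempty) :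
    ∑ p ∈ A, ∑ a ∈ A, ‖a - p‖ ^ 2
      = 2 * A.card * ∑ a ∈ A, ‖a - (A.card : ℝ)⁻¹ • ∑ x ∈ A, x‖ ^ 2 := by
  set μ : E := (A.card : ℝ)⁻¹ • ∑ x ∈ A, x with hμ
  have hcard : (A.card : ℝ) ≠ 0 := by
    exact_mod_cast (Finset.card_pos.2 hA).ne'
  have hsum0 : ∑ a ∈ A, (a - μ) = 0 := by
    rw [Finset.sum_sub_distrib, Finset.sum_const, hμ, ← Nat.cast_smul_eq_nsmul ℝ,
      smul_smul, mul_inv_cancel₀ hcard, one_smul, sub_self]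
  have key : ∀ p a : E, ‖a - p‖ ^ 2
      = ‖a - μ‖ ^ 2 + ‖p - μ‖ ^ 2 - 2 * (inner ℝ (a - μ) (p - μ) : ℝ) := by
    intro p a
    rw [← sub_sub_sub_cancel_right a p μ, @norm_sub_sq_real]; ring
  have h1 : ∀ p : E, ∑ a ∈ A, ‖a - p‖ ^ 2
      = (∑ a ∈ A, ‖a - μ‖ ^ 2) + A.card * ‖p - μ‖ ^ 2 := by
    intro p
    have h2 : ∑ a ∈ A, (inner ℝ (a - μ) (p - μ) : ℝ) = 0 := by
      rw [← sum_inner, hsum0, inner_zero_left]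
    rw [Finset.sum_congr rfl (fun a _ => key p a), Finset.sum_sub_distrib,
      Finset.sum_add_distrib, Finset.sum_const, ← Finset.mul_sum, h2]
    push_cast
    ring
  rw [Finset.sum_congr rfl (fun p _ => h1 p), Finset.sum_add_distrib, Finset.sum_const,
    ← Finset.mul_sum]
  push_cast
  ring

lemma keybound {E : Type*} [NormedAddCommGroup E] [InnerProductSpace ℝ E]
    (A : Finset E) (hA : A.Nonempty) (C : Set E) :
    ∑ p ∈ A, Metric.infDist p C ^ 2 *
        (∑ a ∈ A, min (Metric.infDist a C ^ 2) (dist a p ^ 2))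
      ≤ 8 * (∑ a ∈ A, ‖a - (A.card : ℝ)⁻¹ • ∑ x ∈ A, x‖ ^ 2) *
          (∑ a ∈ A, Metric.infDist a C ^ 2) := by
  set φ : E → ℝ := fun y => Metric.infDist y C ^ 2 with hφ
  have hφnn : ∀ y, 0 ≤ φ y := fun y => sq_nonneg _
  set M : E → ℝ := fun p => ∑ a ∈ A, min (φ a) (dist a p ^ 2) with hM
  set D : E → ℝ := fun p => ∑ a ∈ A, dist a p ^ 2 with hD
  set φA : ℝ := ∑ a ∈ A, φ a with hφA
  have hφAnn : 0 ≤ φA := Finset.sum_nonneg fun a _ => hφnn a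
  have hMD : ∀ p, M p ≤ D p := fun p =>
    Finset.sum_le_sum fun a _ => min_le_right _ _
  have hMφ : ∀ p, M p ≤ φA := fun p =>
    Finset.sum_le_sum fun a _ => min_le_left _ _
  have hMnn : ∀ p, 0 ≤ M p := fun p =>
    Finset.sum_nonneg fun a _ => le_min (hφnn a) (sq_nonneg _)
  have hDnn : ∀ p, 0 ≤ D p := fun p =>
    Finset.sum_nonneg fun a _ => sq_nonneg _
  have hcard : (0:ℝ) < A.card := by exact_mod_cast Finset.card_pos.2 hA
  -- pointwise triangle inequality bound
  have htri : ∀ p a : E, φ p ≤ 2 * φ a + 2 * dist a p ^ 2 := by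
    intro p a
    have h1 : Metric.infDist p C ≤ Metric.infDist a C + dist p a :=
      Metric.infDist_le_infDist_add_dist
    have h2 : (0:ℝ) ≤ Metric.infDist p C := Metric.infDist_nonneg
    have h3 : (0:ℝ) ≤ Metric.infDist a C := Metric.infDist_nonneg
    have h4 : dist p a = dist a p := dist_comm p a
    simp only [hφ]
    nlinarith [sq_nonneg (Metric.infDist a C - dist a p), dist_nonneg (x := p) (y := a)]
  have havg : ∀ p, (A.card : ℝ) * φ p ≤ 2 * φA + 2 * D p := by
    intro p
    have := Finset.sum_le_sum (fun a (_ : a ∈ A) => htri p a)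
    simpa [Finset.sum_add_distrib, Finset.mul_sum, hD, hφA, mul_comm] using this
  -- multiply and sum
  have hmain : (A.card : ℝ) * ∑ p ∈ A, φ p * M p ≤ 4 * φA * ∑ p ∈ A, D p := by
    rw [Finset.mul_sum, Finset.mul_sum]
    apply Finset.sum_le_sum
    intro p _
    have h1 : (A.card : ℝ) * (φ p * M p) = ((A.card : ℝ) * φ p) * M p := by ring
    rw [h1]
    calc ((A.card : ℝ) * φ p) * M p ≤ (2 * φA + 2 * D p) * M p :=
          mul_le_mul_of_nonneg_right (havg p) (hMnn p)
      _ = 2 * φA * M p + 2 * D p * M p := by ring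
      _ ≤ 2 * φA * D p + 2 * D p * φA := by
          have := mul_le_mul_of_nonneg_left (hMD p) (by positivity : (0:ℝ) ≤ 2 * φA)
          have h2 := mul_le_mul_of_nonneg_left (hMφ p) (by positivity : (0:ℝ) ≤ 2 * D p)
          linarith
      _ = 4 * φA * D p := by ring
  have hdd : ∑ p ∈ A, D p = 2 * A.card * ∑ a ∈ A, ‖a - (A.card : ℝ)⁻¹ • ∑ x ∈ A, x‖ ^ 2 := by
    rw [← double_sum_sq A hA]
    simp only [hD, dist_eq_norm]
  rw [hdd] at hmain
  have := mul_le_mul_of_nonneg_left hmain (le_of_lt (inv_pos.2 hcard))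
  rw [← mul_assoc, inv_mul_cancel₀ hcard.ne', one_mul] at this
  calc ∑ p ∈ A, φ p * M p ≤ (A.card:ℝ)⁻¹ * (4 * φA * (2 * A.card *
        ∑ a ∈ A, ‖a - (A.card : ℝ)⁻¹ • ∑ x ∈ A, x‖ ^ 2)) := this
    _ = 8 * (∑ a ∈ A, ‖a - (A.card : ℝ)⁻¹ • ∑ x ∈ A, x‖ ^ 2) * φA := by
        field_simp
        ring

lemma good_set {E : Type*} [NormedAddCommGroup E] [InnerProductSpace ℝ E]
    (A : Finset E) (hA : A.Nonempty) (C Cstar : Set E)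
    (hcluster : ∑ a ∈ A, ‖a - (A.card : ℝ)⁻¹ • ∑ x ∈ A, x‖ ^ 2
      ≤ ∑ a ∈ A, Metric.infDist a Cstar ^ 2) :
    ∑ a ∈ A, Metric.infDist a C ^ 2 ≤
      5 * ∑ p ∈ A.filter (fun p => ∑ a ∈ A, min (Metric.infDist a C ^ 2) (dist a p ^ 2)
            ≤ 10 * ∑ a ∈ A, Metric.infDist a Cstar ^ 2),
          Metric.infDist p C ^ 2 := by
  set φ : E → ℝ := fun y => Metric.infDist y C ^ 2 with hφ
  have hφnn : ∀ y, 0 ≤ φ y := fun y => sq_nonneg _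
  set M : E → ℝ := fun p => ∑ a ∈ A, min (φ a) (dist a p ^ 2) with hM
  have hMnn : ∀ p, 0 ≤ M p := fun p =>
    Finset.sum_nonneg fun a _ => le_min (hφnn a) (sq_nonneg _)
  set φA : ℝ := ∑ a ∈ A, φ a with hφA
  set φstar : ℝ := ∑ a ∈ A, Metric.infDist a Cstar ^ 2 with hφstar
  have hφstarnn : 0 ≤ φstar := Finset.sum_nonneg fun a _ => sq_nonneg _
  set P : E → Prop := fun p => M p ≤ 10 * φstar with hP
  have hφAnn : 0 ≤ φA := Finset.sum_nonneg fun a _ => hφnn a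
  have hkey : ∑ p ∈ A, φ p * M p ≤ 8 * φstar * φA := by
    have h0 := keybound A hA C
    have h1 : 8 * (∑ a ∈ A, ‖a - (A.card : ℝ)⁻¹ • ∑ x ∈ A, x‖ ^ 2) * φA
        ≤ 8 * φstar * φA := by
      apply mul_le_mul_of_nonneg_right _ hφAnn
      linarith
    exact le_trans h0 h1
  have hsplit := Finset.sum_filter_add_sum_filter_not A P φ
  have h1 : 10 * φstar * ∑ p ∈ A.filter (fun p => ¬ P p), φ p
      ≤ ∑ p ∈ A.filter (fun p => ¬ P p), φ p * M p := by
    rw [Finset.mul_sum]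
    apply Finset.sum_le_sum
    intro p hp
    have hnp := (Finset.mem_filter.1 hp).2
    simp only [hP, not_le] at hnp
    calc 10 * φstar * φ p = φ p * (10 * φstar) := by ring
      _ ≤ φ p * M p := mul_le_mul_of_nonneg_left hnp.le (hφnn p)
  have h2 : ∑ p ∈ A.filter (fun p => ¬ P p), φ p * M p ≤ ∑ p ∈ A, φ p * M p :=
    Finset.sum_le_sum_of_subset_of_nonneg (Finset.filter_subset _ _)
      (fun p _ _ => mul_nonneg (hφnn p) (hMnn p))
  have hGnn : 0 ≤ ∑ p ∈ A.filter P, φ p := Finset.sum_nonneg fun p _ => hφnn p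
  rcases eq_or_lt_of_le hφstarnn with h0 | hpos
  · -- φstar = 0
    have hsum0 : ∑ p ∈ A, φ p * M p ≤ 0 := by rw [← h0] at hkey; linarith
    have hall := (Finset.sum_eq_zero_iff_of_nonneg
      (fun p (_ : p ∈ A) => mul_nonneg (hφnn p) (hMnn p))).1
      (le_antisymm hsum0 (Finset.sum_nonneg fun p _ => mul_nonneg (hφnn p) (hMnn p)))
    have hz : ∑ p ∈ A.filter (fun p => ¬ P p), φ p = 0 := by
      apply Finset.sum_eq_zero
      intro p hp
      obtain ⟨hpA, hnp⟩ := Finset.mem_filter.1 hp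
      simp only [hP, not_le] at hnp
      have hMp : 0 < M p := by rw [← h0] at hnp; linarith
      rcases mul_eq_zero.1 (hall p hpA) with h | h
      · exact h
      · exact absurd h hMp.ne'
    show φA ≤ 5 * ∑ p ∈ A.filter P, φ p
    linarith
  · -- 0 < φstar
    show φA ≤ 5 * ∑ p ∈ A.filter P, φ p
    have h3 : 10 * φstar * ∑ p ∈ A.filter (fun p => ¬ P p), φ p ≤ 8 * φstar * φA :=
      le_trans h1 (le_trans h2 hkey)
    have h4 : 10 * ∑ p ∈ A.filter (fun p => ¬ P p), φ p ≤ 8 * φA := by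
      nlinarith
    linarith

/-- One sampling round of k-means|| overseeding: an unsettled optimal cluster A fails to
    become settled with probability at most exp(−ℓ φ_A(C)/(5 φ_X(C))).  The probability
    space is the independent-inclusion distribution on subsets S of X, where each x ∈ X is
    included with probability min(1, ℓ φ_x(C)/φ_X(C)). -/
theorem unsettled_cluster_not_settled_prob (d : ℕ)
    (X A C Cstar : Finset (EuclideanSpace ℝ (Fin d)))
    (hAX : A ⊆ X) (hA : A.Nonempty) (hC : C.Nonempty) (hCstar : Cstar.Nonempty)
    (ℓ : ℝ) (hℓ : 0 < ℓ)
    (hXpos : 0 < ∑ y ∈ X, Metric.infDist y (C : Set (EuclideanSpace ℝ (Fin d))) ^ 2)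
    -- A is a cluster of the optimal solution: its optimal cost is at least its
    -- one-center (centroid) cost
    (hcluster : ∑ a ∈ A, ‖a - (A.card : ℝ)⁻¹ • ∑ x ∈ A, x‖ ^ 2
      ≤ ∑ a ∈ A, Metric.infDist a (Cstar : Set (EuclideanSpace ℝ (Fin d))) ^ 2)
    -- A is unsettled with respect to C
    (hunsettled : 10 * ∑ a ∈ A, Metric.infDist a (Cstar : Set (EuclideanSpace ℝ (Fin d))) ^ 2
      < ∑ a ∈ A, Metric.infDist a (C : Set (EuclideanSpace ℝ (Fin d))) ^ 2) :
    ∑ S ∈ X.powerset.filter (fun S =>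
        10 * ∑ a ∈ A, Metric.infDist a (Cstar : Set (EuclideanSpace ℝ (Fin d))) ^ 2
          < ∑ a ∈ A, Metric.infDist a ((C ∪ S : Finset _) : Set (EuclideanSpace ℝ (Fin d))) ^ 2),
      ((∏ x ∈ S, min 1 (ℓ * Metric.infDist x (C : Set (EuclideanSpace ℝ (Fin d))) ^ 2
            / ∑ y ∈ X, Metric.infDist y (C : Set (EuclideanSpace ℝ (Fin d))) ^ 2)) *
        ∏ x ∈ X \ S, (1 - min 1 (ℓ * Metric.infDist x (C : Set (EuclideanSpace ℝ (Fin d))) ^ 2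
            / ∑ y ∈ X, Metric.infDist y (C : Set (EuclideanSpace ℝ (Fin d))) ^ 2)))
      ≤ Real.exp (-(ℓ * (∑ a ∈ A, Metric.infDist a (C : Set (EuclideanSpace ℝ (Fin d))) ^ 2)
          / (5 * ∑ y ∈ X, Metric.infDist y (C : Set (EuclideanSpace ℝ (Fin d))) ^ 2))) := by
  have E := 0  -- dummy
  clear E
  set φ : EuclideanSpace ℝ (Fin d) → ℝ := fun y => Metric.infDist y (C : Set (EuclideanSpace ℝ (Fin d))) ^ 2 with hφ
  have hφnn : ∀ y, 0 ≤ φ y := fun y => sq_nonneg _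
  set φX : ℝ := ∑ y ∈ X, φ y with hφX
  set φA : ℝ := ∑ a ∈ A, φ a with hφA
  set φstar : ℝ := ∑ a ∈ A, Metric.infDist a (Cstar : Set (EuclideanSpace ℝ (Fin d))) ^ 2 with hφstar
  set p : EuclideanSpace ℝ (Fin d) → ℝ := fun x => min 1 (ℓ * φ x / φX) with hp
  have hp0 : ∀ x, 0 ≤ p x := fun x =>
    le_min zero_le_one (div_nonneg (mul_nonneg hℓ.le (hφnn x)) hXpos.le)
  have hp1 : ∀ x, p x ≤ 1 := fun x => min_le_left _ _
  set G : Finset (EuclideanSpace ℝ (Fin d)) := A.filter (fun q => ∑ a ∈ A, min (φ a) (dist a q ^ 2)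
      ≤ 10 * φstar) with hGdef
  have hGA : G ⊆ A := Finset.filter_subset _ _
  have hGX : G ⊆ X := hGA.trans hAX
  have hG : φA ≤ 5 * ∑ q ∈ G, φ q := good_set A hA _ _ hcluster
  -- the event forces S to miss G
  have hev : ∀ S : Finset (EuclideanSpace ℝ (Fin d)), S ⊆ X →
      (10 * φstar < ∑ a ∈ A, Metric.infDist a ((C ∪ S : Finset _) : Set (EuclideanSpace ℝ (Fin d))) ^ 2) →
      Disjoint S G := by
    intro S hSX hevS
    rw [Finset.disjoint_left]
    intro q hqS hqG
    obtain ⟨hqA, hqM⟩ := Finset.mem_filter.1 hqG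
    have hle : ∑ a ∈ A, Metric.infDist a ((C ∪ S : Finset _) : Set (EuclideanSpace ℝ (Fin d))) ^ 2
        ≤ ∑ a ∈ A, min (φ a) (dist a q ^ 2) := by
      apply Finset.sum_le_sum
      intro a _
      refine le_min ?_ ?_
      · refine pow_le_pow_left₀ Metric.infDist_nonneg ?_ 2
        exact Metric.infDist_le_infDist_of_subset
          (by exact_mod_cast Finset.coe_subset.2 (Finset.subset_union_left))
          (Finset.coe_nonempty.2 hC)
      · refine pow_le_pow_left₀ Metric.infDist_nonneg ?_ 2
        exact Metric.infDist_le_dist_of_mem (by simp [hqS])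
    linarith
  -- weights are nonnegative
  have hwnn : ∀ S : Finset (EuclideanSpace ℝ (Fin d)), 0 ≤ (∏ x ∈ S, p x) * ∏ x ∈ X \ S, (1 - p x) := by
    intro S
    apply mul_nonneg (Finset.prod_nonneg fun x _ => hp0 x)
    exact Finset.prod_nonneg fun x _ => by linarith [hp1 x]
  calc ∑ S ∈ X.powerset.filter (fun S =>
        10 * φstar < ∑ a ∈ A, Metric.infDist a ((C ∪ S : Finset _) : Set (EuclideanSpace ℝ (Fin d))) ^ 2),
      ((∏ x ∈ S, p x) * ∏ x ∈ X \ S, (1 - p x))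
      ≤ ∑ S ∈ (X \ G).powerset, ((∏ x ∈ S, p x) * ∏ x ∈ X \ S, (1 - p x)) := by
        apply Finset.sum_le_sum_of_subset_of_nonneg
        · intro S hS
          obtain ⟨hSX, hevS⟩ := Finset.mem_filter.1 hS
          rw [Finset.mem_powerset] at hSX ⊢
          exact Finset.subset_sdiff.2 ⟨hSX, hev S hSX hevS⟩
        · intro S _ _
          exact hwnn S
    _ = (∏ x ∈ G, (1 - p x)) *
          ∑ S ∈ (X \ G).powerset, ((∏ x ∈ S, p x) * ∏ x ∈ (X \ G) \ S, (1 - p x)) := by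
        rw [Finset.mul_sum]
        apply Finset.sum_congr rfl
        intro S hS
        rw [Finset.mem_powerset] at hS
        have hSX : S ⊆ X := hS.trans (Finset.sdiff_subset)
        have hGXS : G ⊆ X \ S := Finset.subset_sdiff.2
          ⟨hGX, (Finset.sdiff_disjoint.mono_left hS).symm⟩
        have hsplit : (∏ x ∈ (X \ S) \ G, (1 - p x)) * ∏ x ∈ G, (1 - p x)
            = ∏ x ∈ X \ S, (1 - p x) := Finset.prod_sdiff hGXS
        have hcomm : (X \ S) \ G = (X \ G) \ S := by
          ext x; simp only [Finset.mem_sdiff]; tauto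
        rw [← hsplit, hcomm]
        ring
    _ = (∏ x ∈ G, (1 - p x)) * ∏ x ∈ X \ G, (p x + (1 - p x)) := by
        rw [Finset.prod_add]
    _ = ∏ x ∈ G, (1 - p x) := by
        have : ∀ x ∈ X \ G, p x + (1 - p x) = 1 := fun x _ => by ring
        rw [Finset.prod_congr rfl this, Finset.prod_const_one, mul_one]
    _ ≤ Real.exp (-(ℓ * φA / (5 * φX))) := by
        by_cases hbig : ∃ x ∈ G, 1 ≤ ℓ * φ x / φX
        · obtain ⟨x, hxG, hx⟩ := hbig
          have : (1 : ℝ) - p x = 0 := by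
            simp only [hp, min_eq_left hx, sub_self]
          rw [Finset.prod_eq_zero hxG this]
          exact (Real.exp_pos _).le
        · push_neg at hbig
          have hpx : ∀ x ∈ G, p x = ℓ * φ x / φX := fun x hx =>
            min_eq_right (hbig x hx).le
          calc ∏ x ∈ G, (1 - p x) ≤ ∏ x ∈ G, Real.exp (-(p x)) := by
                apply Finset.prod_le_prod (fun x _ => by linarith [hp1 x])
                intro x _
                linarith [Real.add_one_le_exp (-(p x))]
            _ = Real.exp (∑ x ∈ G, -(p x)) := by rw [Real.exp_sum]
            _ ≤ Real.exp (-(ℓ * φA / (5 * φX))) := by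
                apply Real.exp_le_exp.2
                have hsum : ∑ x ∈ G, p x = ℓ * (∑ q ∈ G, φ q) / φX := by
                  rw [Finset.sum_congr rfl hpx, ← Finset.sum_div, ← Finset.mul_sum]
                have hineq : ℓ * φA / (5 * φX) ≤ ∑ x ∈ G, p x := by
                  rw [hsum, div_le_div_iff₀ (by positivity) hXpos]
                  nlinarith [mul_le_mul_of_nonneg_left hG (mul_nonneg hℓ.le hXpos.le)]
                have hneg : ∑ x ∈ G, -p x = -∑ x ∈ G, p x := by
                  rw [Finset.sum_neg_distrib]
                rw [hneg]
                exact neg_le_neg hineq
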